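/- Theorem (dimension reduction of the conditional covariance): Let Λ be an N_G×N_G diagonal matrix with positive entries, R an N_G×N_m matrix with 0 < N_m < N_G, and suppose Σ = Rᵀ Λ R has rank N_m. Define M = I − Λ^{1/2} R Σ^{-1} Rᵀ Λ^{1/2} and the conditional covariance matrix C = Λ^{1/2} M Λ^{1/2}. Then rank(C) = N_G − N_m. -/

import Mathlib

open Matrix

lemma matrix_rank_add_le {n : ℕ} (A B : Matrix (Fin n) (Fin n) ℝ) :
    (A + B).rank ≤ A.rank + B.rank := by
  rw [Matrix.rank, Matrix.rank, Matrix.rank]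
  have hle : LinearMap.range (A + B).mulVecLin ≤
      LinearMap.range A.mulVecLin ⊔ LinearMap.range B.mulVecLin := by
    rintro x ⟨v, rfl⟩
    rw [Matrix.mulVecLin_add]
    exact Submodule.add_mem_sup ⟨v, rfl⟩ ⟨v, rfl⟩
  exact (Submodule.finrank_mono hle).trans
    (Submodule.finrank_add_le_finrank_add_finrank _ _)

/-- Dimension reduction of the conditional covariance: with Λ diagonal
positive, 0 < N_m < N_G, Σ = Rᵀ Λ R of rank N_m,
M = I − Λ^{1/2} R Σ⁻¹ Rᵀ Λ^{1/2} and C = Λ^{1/2} M Λ^{1/2}, we have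
rank(C) = N_G − N_m. -/
theorem stmt_10 (NG Nm : ℕ) (h0 : 0 < Nm) (hlt : Nm < NG)
    (d : Fin NG → ℝ) (hd : ∀ i, 0 < d i)
    (R : Matrix (Fin NG) (Fin Nm) ℝ)
    (S : Matrix (Fin Nm) (Fin Nm) ℝ) (hS : S = Rᵀ * Matrix.diagonal d * R)
    (hrank : S.rank = Nm)
    (sqrtΛ : Matrix (Fin NG) (Fin NG) ℝ)
    (hsqrt : sqrtΛ = Matrix.diagonal fun i => Real.sqrt (d i))
    (M : Matrix (Fin NG) (Fin NG) ℝ)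
    (hM : M = 1 - sqrtΛ * R * S⁻¹ * Rᵀ * sqrtΛ)
    (C : Matrix (Fin NG) (Fin NG) ℝ) (hC : C = sqrtΛ * M * sqrtΛ) :
    C.rank = NG - Nm := by
  -- sqrtΛ squared is diagonal d
  have hsq : sqrtΛ * sqrtΛ = Matrix.diagonal d := by
    rw [hsqrt, Matrix.diagonal_mul_diagonal]
    have : (fun i => Real.sqrt (d i) * Real.sqrt (d i)) = d :=
      funext fun i => Real.mul_self_sqrt (hd i).le
    rw [this]
  have hsymm : sqrtΛᵀ = sqrtΛ := by rw [hsqrt, Matrix.diagonal_transpose]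
  set B : Matrix (Fin NG) (Fin Nm) ℝ := sqrtΛ * R with hB
  have hSB : S = Bᵀ * B := by
    rw [hS, hB, Matrix.transpose_mul, hsymm, ← hsq]
    simp only [Matrix.mul_assoc]
  -- S is invertible
  have hSu : IsUnit S.det := by
    have hsurj : Function.Surjective S.mulVecLin := by
      rw [← LinearMap.range_eq_top]
      apply Submodule.eq_top_of_finrank_eq
      rw [← Matrix.rank, hrank, Module.finrank_fintype_fun_eq_card, Fintype.card_fin]
    have hinj : Function.Injective S.mulVecLin :=
      (LinearMap.injective_iff_surjective (f := S.mulVecLin)).2 hsurj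
    rw [← Matrix.isUnit_iff_isUnit_det]
    exact Matrix.mulVec_injective_iff_isUnit.1 (by simpa only [Matrix.coe_mulVecLin] using hinj)
  -- rank of B
  have hBrank : B.rank = Nm := by
    rw [← Matrix.rank_transpose_mul_self, ← hSB, hrank]
  set P : Matrix (Fin NG) (Fin NG) ℝ := B * S⁻¹ * Bᵀ with hP
  have hMP : M = 1 - P := by
    rw [hM, hP, hB, Matrix.transpose_mul, hsymm]
    simp only [Matrix.mul_assoc]
  -- P * B = B
  have hPB : P * B = B := by
    rw [hP]
    calc B * S⁻¹ * Bᵀ * B = B * (S⁻¹ * (Bᵀ * B)) := by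
          simp only [Matrix.mul_assoc]
    _ = B := by rw [← hSB, Matrix.nonsing_inv_mul _ hSu, Matrix.mul_one]
  -- rank of P = Nm
  have hPrank : P.rank = Nm := by
    refine le_antisymm ?_ ?_
    · calc P.rank ≤ Bᵀ.rank := Matrix.rank_mul_le_right _ _
      _ = B.rank := Matrix.rank_transpose _
      _ = Nm := hBrank
    · calc Nm = B.rank := hBrank.symm
      _ = (P * B).rank := by rw [hPB]
      _ ≤ P.rank := Matrix.rank_mul_le_left _ _
  -- M * P = 0
  have hMP0 : M * P = 0 := by
    have hPP : P * P = P := by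
      calc B * S⁻¹ * Bᵀ * (B * S⁻¹ * Bᵀ) = B * (S⁻¹ * (Bᵀ * B)) * S⁻¹ * Bᵀ := by
            simp only [Matrix.mul_assoc]
      _ = B * S⁻¹ * Bᵀ := by rw [← hSB, Matrix.nonsing_inv_mul _ hSu, Matrix.mul_one]
    rw [hMP, Matrix.sub_mul, Matrix.one_mul, hPP, sub_self]
  have hle : M.rank + P.rank ≤ NG := by
    have := Matrix.rank_add_rank_le_card_of_mul_eq_zero hMP0
    simpa using this
  have hge : NG ≤ M.rank + P.rank := by
    have h1 : (M + P).rank = NG := by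
      have : M + P = 1 := by rw [hMP, sub_add_cancel]
      rw [this, Matrix.rank_one, Fintype.card_fin]
    calc NG = (M + P).rank := h1.symm
    _ ≤ M.rank + P.rank := matrix_rank_add_le _ _
  have hMrank : M.rank = NG - Nm := by omega
  -- sqrtΛ is invertible
  have hsu : IsUnit sqrtΛ.det := by
    rw [hsqrt, Matrix.det_diagonal]
    refine isUnit_iff_ne_zero.2 (Finset.prod_ne_zero_iff.2 fun i _ => ?_)
    exact (Real.sqrt_pos.2 (hd i)).ne'
  rw [hC, Matrix.rank_mul_eq_left_of_isUnit_det _ _ hsu,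
    Matrix.rank_mul_eq_right_of_isUnit_det _ _ hsu, hMrank]
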